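/- Let G be a finite simple graph containing an induced cycle C = (v_1, v_2, ..., v_{2ℓ+1}) of odd length 2ℓ+1 ≥ 5. Consider the vectors a_e = e_u + e_v for edges {u,v} of G together with the vectors 2e_v for each vertex v. Then the identity (e_1 + e_{2ℓ+1}) + Σ_{k=1}^{ℓ}(e_{2k−1} + e_{2k}) = 2e_1 + Σ_{k=1}^{ℓ}(e_{2k} + e_{2k+1}) holds, the two multisets of summands are disjoint, and no sum of two vectors from the left side equals a sum of two vectors from the configuration other than itself: i.e., for any two summands a, a' from the left side and any vectors b, b' in the configuration, a + a' = b + b' implies {a, a'} = {b, b'}. -/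

import Mathlib

/-- The standard basis vector `e_a` of `ℤ^V`. -/
def ev {V : Type*} [DecidableEq V] (a : V) : V → ℤ := Pi.single a 1

section stmt9aux

variable {α : Type*}

private lemma ms_rot2' (c d : α) : ({c, d} : Multiset α) = {d, c} := Multiset.pair_comm c d

private lemma ms_rot3b' (c d e : α) : ({c, d, e} : Multiset α) = {d, c, e} := by
  simp only [Multiset.insert_eq_cons, ← Multiset.cons_zero]
  rw [Multiset.cons_swap c d]

private lemma ms_rot3c' (c d e : α) : ({c, d, e} : Multiset α) = {e, c, d} := by
  simp only [Multiset.insert_eq_cons, ← Multiset.cons_zero]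
  rw [Multiset.cons_swap d e, Multiset.cons_swap c e]

private lemma ms_rot4b' (p q r s : α) : ({p, q, r, s} : Multiset α) = {q, p, r, s} := by
  simp only [Multiset.insert_eq_cons, ← Multiset.cons_zero]
  rw [Multiset.cons_swap p q]

private lemma ms_rot4c' (p q r s : α) : ({p, q, r, s} : Multiset α) = {r, p, q, s} := by
  simp only [Multiset.insert_eq_cons, ← Multiset.cons_zero]
  rw [Multiset.cons_swap q r, Multiset.cons_swap p r]

private lemma ms_rot4d' (p q r s : α) : ({p, q, r, s} : Multiset α) = {s, p, q, r} := by
  simp only [Multiset.insert_eq_cons, ← Multiset.cons_zero]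
  rw [Multiset.cons_swap r s, Multiset.cons_swap q s, Multiset.cons_swap p s]

private lemma ms_pair2 {x y c d : α} (h : ({x, y} : Multiset α) = {c, d}) :
    (x = c ∧ y = d) ∨ (x = d ∧ y = c) := by
  have hx : x ∈ ({c, d} : Multiset α) := by rw [← h]; exact Multiset.mem_cons_self x _
  rcases Multiset.mem_cons.mp hx with rfl | hx
  · refine Or.inl ⟨rfl, ?_⟩
    exact Multiset.singleton_inj.mp ((Multiset.cons_inj_right x).mp h)
  · rcases Multiset.mem_singleton.mp hx with rfl
    refine Or.inr ⟨rfl, ?_⟩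
    rw [ms_rot2' c x] at h
    exact Multiset.singleton_inj.mp ((Multiset.cons_inj_right x).mp h)

private lemma ms_triple {y z w c d e : α} (h : ({y, z, w} : Multiset α) = {c, d, e}) :
    (y = c ∧ ({z, w} : Multiset α) = {d, e}) ∨ (y = d ∧ ({z, w} : Multiset α) = {c, e}) ∨
      (y = e ∧ ({z, w} : Multiset α) = {c, d}) := by
  have hy : y ∈ ({c, d, e} : Multiset α) := by rw [← h]; exact Multiset.mem_cons_self y _
  rcases Multiset.mem_cons.mp hy with rfl | hy
  · exact Or.inl ⟨rfl, (Multiset.cons_inj_right y).mp h⟩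
  rcases Multiset.mem_cons.mp hy with rfl | hy
  · rw [ms_rot3b' c y e] at h
    exact Or.inr (Or.inl ⟨rfl, (Multiset.cons_inj_right y).mp h⟩)
  · rcases Multiset.mem_singleton.mp hy with rfl
    rw [ms_rot3c' c d y] at h
    exact Or.inr (Or.inr ⟨rfl, (Multiset.cons_inj_right y).mp h⟩)

private lemma ms_quad4 {x y z w p q r s : α} (h : ({x, y, z, w} : Multiset α) = {p, q, r, s}) :
    (x = p ∧ ({y, z, w} : Multiset α) = {q, r, s}) ∨
    (x = q ∧ ({y, z, w} : Multiset α) = {p, r, s}) ∨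
    (x = r ∧ ({y, z, w} : Multiset α) = {p, q, s}) ∨
    (x = s ∧ ({y, z, w} : Multiset α) = {p, q, r}) := by
  have hx : x ∈ ({p, q, r, s} : Multiset α) := by rw [← h]; exact Multiset.mem_cons_self x _
  rcases Multiset.mem_cons.mp hx with rfl | hx
  · exact Or.inl ⟨rfl, (Multiset.cons_inj_right x).mp h⟩
  rcases Multiset.mem_cons.mp hx with rfl | hx
  · rw [ms_rot4b' p x r s] at h
    exact Or.inr (Or.inl ⟨rfl, (Multiset.cons_inj_right x).mp h⟩)
  rcases Multiset.mem_cons.mp hx with rfl | hx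
  · rw [ms_rot4c' p q x s] at h
    exact Or.inr (Or.inr (Or.inl ⟨rfl, (Multiset.cons_inj_right x).mp h⟩))
  · rcases Multiset.mem_singleton.mp hx with rfl
    rw [ms_rot4d' p q r x] at h
    exact Or.inr (Or.inr (Or.inr ⟨rfl, (Multiset.cons_inj_right x).mp h⟩))

/-- partition trichotomy (with both orders): if two pairs have the same union (as multisets)
as the pairs `{p,q}`, `{r,s}`, then the pairs split the four elements in one of six ways. -/
private lemma ms_quad {x y z w p q r s : α} (h : ({x, y, z, w} : Multiset α) = {p, q, r, s}) :
    (({x,y}:Multiset α) = {p,q} ∧ ({z,w}:Multiset α) = {r,s}) ∨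
    (({x,y}:Multiset α) = {r,s} ∧ ({z,w}:Multiset α) = {p,q}) ∨
    (({x,y}:Multiset α) = {p,r} ∧ ({z,w}:Multiset α) = {q,s}) ∨
    (({x,y}:Multiset α) = {q,s} ∧ ({z,w}:Multiset α) = {p,r}) ∨
    (({x,y}:Multiset α) = {p,s} ∧ ({z,w}:Multiset α) = {q,r}) ∨
    (({x,y}:Multiset α) = {q,r} ∧ ({z,w}:Multiset α) = {p,s}) := by
  rcases ms_quad4 h with ⟨rfl, h3⟩ | ⟨rfl, h3⟩ | ⟨rfl, h3⟩ | ⟨rfl, h3⟩ <;>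
    rcases ms_triple h3 with ⟨rfl, h2⟩ | ⟨rfl, h2⟩ | ⟨rfl, h2⟩
  · exact Or.inl ⟨rfl, h2⟩
  · exact Or.inr (Or.inr (Or.inl ⟨rfl, h2⟩))
  · exact Or.inr (Or.inr (Or.inr (Or.inr (Or.inl ⟨rfl, h2⟩))))
  · exact Or.inl ⟨ms_rot2' _ _, h2⟩
  · exact Or.inr (Or.inr (Or.inr (Or.inr (Or.inr ⟨rfl, h2⟩))))
  · exact Or.inr (Or.inr (Or.inr (Or.inl ⟨rfl, h2⟩)))
  · exact Or.inr (Or.inr (Or.inl ⟨ms_rot2' _ _, h2⟩))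
  · exact Or.inr (Or.inr (Or.inr (Or.inr (Or.inr ⟨ms_rot2' _ _, h2⟩))))
  · exact Or.inr (Or.inl ⟨rfl, h2⟩)
  · exact Or.inr (Or.inr (Or.inr (Or.inr (Or.inl ⟨ms_rot2' _ _, h2⟩))))
  · exact Or.inr (Or.inr (Or.inr (Or.inl ⟨ms_rot2' _ _, h2⟩)))
  · exact Or.inr (Or.inl ⟨ms_rot2' _ _, h2⟩)

variable {V : Type*} [DecidableEq V]

/-- the counting function of a multiset, as a vector in `ℤ^V` -/
private def cnt (m : Multiset V) : V → ℤ := fun x => (m.count x : ℤ)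

private lemma cnt_inj {m m' : Multiset V} (h : cnt m = cnt m') : m = m' :=
  Multiset.ext.mpr fun x => by
    have := congrFun h x; simp only [cnt] at this; exact_mod_cast this

private lemma ev_pair (a b : V) : ev a + ev b = cnt {a, b} := by
  funext x
  simp only [cnt, Pi.add_apply, ev, Pi.single_apply, Multiset.insert_eq_cons,
    Multiset.count_cons, Multiset.count_singleton]
  push_cast
  split_ifs <;> omega

private lemma ev_sum4 (a b c d : V) : (ev a + ev b) + (ev c + ev d) = cnt {a, b, c, d} := by
  funext x
  simp only [cnt, Pi.add_apply, ev, Pi.single_apply, Multiset.insert_eq_cons,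
    Multiset.count_cons, Multiset.count_singleton]
  push_cast
  split_ifs <;> omega

private lemma ev_pair_of_ms {a b c d : V} (h : ({a, b} : Multiset V) = {c, d}) :
    ev a + ev b = ev c + ev d := by
  rcases ms_pair2 h with ⟨rfl, rfl⟩ | ⟨rfl, rfl⟩
  · rfl
  · exact add_comm _ _

end stmt9aux

/-- for an induced odd cycle `v_0, ..., v_{2ℓ}` (`2ℓ+1 ≥ 5`) of a graph `G`,
the identity `(e_{v_0}+e_{v_{2ℓ}}) + Σ_{k<ℓ}(e_{v_{2k}}+e_{v_{2k+1}})
= 2e_{v_0} + Σ_{k<ℓ}(e_{v_{2k+1}}+e_{v_{2k+2}})` holds, the two multisets of summands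
are disjoint, and sums of two left-side summands are uniquely represented among the
configuration vectors `e_u + e_w` (`{u,w} ∈ E(G)`) and `2e_w`. -/
theorem stmt9 (V : Type*) [Fintype V] [DecidableEq V] (G : SimpleGraph V)
    (ℓ : ℕ) (hl : 2 ≤ ℓ) (v : ℕ → V)
    (hinj : Set.InjOn v (Set.Iio (2 * ℓ + 1)))
    (hind : ∀ s < 2 * ℓ + 1, ∀ t < 2 * ℓ + 1, (G.Adj (v s) (v t) ↔
      (t = s + 1 ∨ s = t + 1 ∨ (s = 0 ∧ t = 2 * ℓ) ∨ (t = 0 ∧ s = 2 * ℓ)))) :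
    let L : Multiset (V → ℤ) :=
      (ev (v 0) + ev (v (2 * ℓ))) ::ₘ
        (Multiset.range ℓ).map (fun k => ev (v (2 * k)) + ev (v (2 * k + 1)))
    let R : Multiset (V → ℤ) :=
      ((2 : ℤ) • ev (v 0)) ::ₘ
        (Multiset.range ℓ).map (fun k => ev (v (2 * k + 1)) + ev (v (2 * k + 2)))
    let Conf : Set (V → ℤ) :=
      { w | (∃ x y, G.Adj x y ∧ w = ev x + ev y) ∨ (∃ x, w = (2 : ℤ) • ev x) }
    L.sum = R.sum ∧ Disjoint L R ∧
      ∀ a a' : V → ℤ, ({a, a'} : Multiset (V → ℤ)) ≤ L →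
        ∀ b b' : V → ℤ, b ∈ Conf → b' ∈ Conf → a + a' = b + b' →
          ({a, a'} : Multiset (V → ℤ)) = {b, b'} := by
  intro L R Conf
  -- injectivity of v on indices
  have hv : ∀ i j, i < 2 * ℓ + 1 → j < 2 * ℓ + 1 → v i = v j → i = j := fun i j hi hj h =>
    hinj (Set.mem_Iio.mpr hi) (Set.mem_Iio.mpr hj) h
  -- comparing pairs of basis vectors
  have pairidx : ∀ i j i' j' : ℕ, i < 2 * ℓ + 1 → j < 2 * ℓ + 1 → i' < 2 * ℓ + 1 →
      j' < 2 * ℓ + 1 → ev (v i) + ev (v j) = ev (v i') + ev (v j') →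
      (i = i' ∧ j = j') ∨ (i = j' ∧ j = i') := by
    intro i j i' j' hi hj hi' hj' h
    have h2 : ({v i, v j} : Multiset V) = {v i', v j'} :=
      cnt_inj (by rw [← ev_pair, ← ev_pair]; exact h)
    rcases ms_pair2 h2 with ⟨e1, e2⟩ | ⟨e1, e2⟩
    · exact Or.inl ⟨hv _ _ hi hi' e1, hv _ _ hj hj' e2⟩
    · exact Or.inr ⟨hv _ _ hi hj' e1, hv _ _ hj hi' e2⟩
  refine ⟨?_, ?_, ?_⟩
  · -- Part 1: the sum identity
    show ((ev (v 0) + ev (v (2 * ℓ))) ::ₘ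
        (Multiset.range ℓ).map (fun k => ev (v (2 * k)) + ev (v (2 * k + 1)))).sum =
      (((2 : ℤ) • ev (v 0)) ::ₘ
        (Multiset.range ℓ).map (fun k => ev (v (2 * k + 1)) + ev (v (2 * k + 2)))).sum
    rw [Multiset.sum_cons, Multiset.sum_cons]
    have hms : ∀ g : ℕ → V → ℤ, ((Multiset.range ℓ).map g).sum = ∑ k ∈ Finset.range ℓ, g k :=
      fun g => rfl
    rw [hms, hms]
    have h1 : (∑ k ∈ Finset.range ℓ, (ev (v (2 * k)) + ev (v (2 * k + 1)))) -
        (∑ k ∈ Finset.range ℓ, (ev (v (2 * k + 1)) + ev (v (2 * k + 2)))) =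
        ev (v 0) - ev (v (2 * ℓ)) := by
      rw [← Finset.sum_sub_distrib]
      have : ∀ k ∈ Finset.range ℓ,
          (ev (v (2 * k)) + ev (v (2 * k + 1))) - (ev (v (2 * k + 1)) + ev (v (2 * k + 2))) =
          (fun k => ev (v (2 * k))) k - (fun k => ev (v (2 * k))) (k + 1) := by
        intro k _
        have h2 : 2 * (k + 1) = 2 * k + 2 := by ring
        simp only [h2]
        abel
      rw [Finset.sum_congr rfl this, Finset.sum_range_sub' (fun k => ev (v (2 * k))) ℓ]
    have h2 : (∑ k ∈ Finset.range ℓ, (ev (v (2 * k)) + ev (v (2 * k + 1)))) =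
        ev (v 0) - ev (v (2 * ℓ)) +
          ∑ k ∈ Finset.range ℓ, (ev (v (2 * k + 1)) + ev (v (2 * k + 2))) :=
      sub_eq_iff_eq_add.mp h1
    rw [h2, two_smul]
    abel
  · -- Part 2: disjointness
    refine Multiset.disjoint_left.mpr ?_
    intro w hwL hwR
    have hwL' : w = ev (v 0) + ev (v (2 * ℓ)) ∨
        ∃ k, k < ℓ ∧ w = ev (v (2 * k)) + ev (v (2 * k + 1)) := by
      rcases Multiset.mem_cons.mp hwL with h | h
      · exact Or.inl h
      · obtain ⟨k, hk, he⟩ := Multiset.mem_map.mp h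
        exact Or.inr ⟨k, Multiset.mem_range.mp hk, he.symm⟩
    have hwR' : w = (2 : ℤ) • ev (v 0) ∨
        ∃ k, k < ℓ ∧ w = ev (v (2 * k + 1)) + ev (v (2 * k + 2)) := by
      rcases Multiset.mem_cons.mp hwR with h | h
      · exact Or.inl h
      · obtain ⟨k, hk, he⟩ := Multiset.mem_map.mp h
        exact Or.inr ⟨k, Multiset.mem_range.mp hk, he.symm⟩
    rcases hwL' with hL | ⟨k, hk, hL⟩ <;> rcases hwR' with hR | ⟨j, hj, hR⟩
    · have h : ev (v 0) + ev (v (2 * ℓ)) = ev (v 0) + ev (v 0) := by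
        rw [← hL, hR, two_smul]
      rcases pairidx 0 (2 * ℓ) 0 0 (by omega) (by omega) (by omega) (by omega) h with
        ⟨_, h2⟩ | ⟨h2, _⟩ <;> omega
    · have h : ev (v 0) + ev (v (2 * ℓ)) = ev (v (2 * j + 1)) + ev (v (2 * j + 2)) := by
        rw [← hL, hR]
      rcases pairidx 0 (2 * ℓ) (2 * j + 1) (2 * j + 2) (by omega) (by omega) (by omega)
        (by omega) h with ⟨h2, _⟩ | ⟨h2, _⟩ <;> omega
    · have h : ev (v (2 * k)) + ev (v (2 * k + 1)) = ev (v 0) + ev (v 0) := by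
        rw [← hL, hR, two_smul]
      rcases pairidx (2 * k) (2 * k + 1) 0 0 (by omega) (by omega) (by omega) (by omega) h with
        ⟨_, h2⟩ | ⟨_, h2⟩ <;> omega
    · have h : ev (v (2 * k)) + ev (v (2 * k + 1)) = ev (v (2 * j + 1)) + ev (v (2 * j + 2)) := by
        rw [← hL, hR]
      rcases pairidx (2 * k) (2 * k + 1) (2 * j + 1) (2 * j + 2) (by omega) (by omega) (by omega)
        (by omega) h with ⟨h2, h3⟩ | ⟨h2, h3⟩ <;> omega
  · -- Part 3: uniqueness of representations
    intro a a' hle b b' hb hb' heq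
    -- representation of configuration vectors
    have repr : ∀ w : V → ℤ, w ∈ Conf → ∃ x y, (G.Adj x y ∨ x = y) ∧ w = ev x + ev y := by
      intro w hw
      rcases hw with ⟨x, y, hadj, rfl⟩ | ⟨x, rfl⟩
      · exact ⟨x, y, Or.inl hadj, rfl⟩
      · exact ⟨x, x, Or.inr rfl, two_smul ℤ (ev x)⟩
    have notGood : ∀ i j : ℕ, i < 2 * ℓ + 1 → j < 2 * ℓ + 1 → i ≠ j →
        ¬(j = i + 1 ∨ i = j + 1 ∨ (i = 0 ∧ j = 2 * ℓ) ∨ (j = 0 ∧ i = 2 * ℓ)) →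
        ¬(G.Adj (v i) (v j) ∨ v i = v j) := by
      intro i j hi hj hne hno h
      rcases h with h | h
      · exact hno ((hind i hi j hj).mp h)
      · exact hne (hv i j hi hj h)
    have badpair : ∀ (x y : V) (i j : ℕ), (G.Adj x y ∨ x = y) →
        ({x, y} : Multiset V) = {v i, v j} → (G.Adj (v i) (v j) ∨ v i = v j) := by
      intro x y i j hxy h
      rcases ms_pair2 h with ⟨rfl, rfl⟩ | ⟨rfl, rfl⟩
      · exact hxy
      · rcases hxy with h | h
        · exact Or.inl h.symm
        · exact Or.inr h.symm
    -- the master lemma for pairs of edges with no cross adjacencies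
    have master : ∀ p q r s : ℕ,
        (¬(G.Adj (v p) (v r) ∨ v p = v r) ∨ ¬(G.Adj (v q) (v s) ∨ v q = v s)) →
        (¬(G.Adj (v p) (v s) ∨ v p = v s) ∨ ¬(G.Adj (v q) (v r) ∨ v q = v r)) →
        ∀ b b' : V → ℤ, b ∈ Conf → b' ∈ Conf →
          (ev (v p) + ev (v q)) + (ev (v r) + ev (v s)) = b + b' →
          ({ev (v p) + ev (v q), ev (v r) + ev (v s)} : Multiset (V → ℤ)) = {b, b'} := by
      intro p q r s hbad1 hbad2 b b' hb hb' heq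
      obtain ⟨x, y, hxy, rfl⟩ := repr b hb
      obtain ⟨x', y', hxy', rfl⟩ := repr b' hb'
      have hM : ({x, y, x', y'} : Multiset V) = {v p, v q, v r, v s} := by
        refine cnt_inj ?_
        rw [← ev_sum4, ← ev_sum4, ← heq]
      rcases ms_quad hM with ⟨h1, h2⟩ | ⟨h1, h2⟩ | ⟨h1, h2⟩ | ⟨h1, h2⟩ | ⟨h1, h2⟩ | ⟨h1, h2⟩
      · rw [ev_pair_of_ms h1, ev_pair_of_ms h2]
      · rw [ev_pair_of_ms h1, ev_pair_of_ms h2]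
        exact ms_rot2' _ _
      · rcases hbad1 with h | h
        · exact absurd (badpair _ _ _ _ hxy h1) h
        · exact absurd (badpair _ _ _ _ hxy' h2) h
      · rcases hbad1 with h | h
        · exact absurd (badpair _ _ _ _ hxy' h2) h
        · exact absurd (badpair _ _ _ _ hxy h1) h
      · rcases hbad2 with h | h
        · exact absurd (badpair _ _ _ _ hxy h1) h
        · exact absurd (badpair _ _ _ _ hxy' h2) h
      · rcases hbad2 with h | h
        · exact absurd (badpair _ _ _ _ hxy' h2) h
        · exact absurd (badpair _ _ _ _ hxy h1) h
    -- the shared-vertex case: the edges {0, 2ℓ} and {0, 1}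
    have shared : ∀ b b' : V → ℤ, b ∈ Conf → b' ∈ Conf →
        (ev (v 0) + ev (v (2 * ℓ))) + (ev (v 0) + ev (v 1)) = b + b' →
        ({ev (v 0) + ev (v (2 * ℓ)), ev (v 0) + ev (v 1)} : Multiset (V → ℤ)) = {b, b'} := by
      intro b b' hb hb' heq
      obtain ⟨x, y, hxy, rfl⟩ := repr b hb
      obtain ⟨x', y', hxy', rfl⟩ := repr b' hb'
      have hM : ({x, y, x', y'} : Multiset V) = {v 0, v (2 * ℓ), v 0, v 1} := by
        refine cnt_inj ?_
        rw [← ev_sum4, ← ev_sum4, ← heq]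
      have hQS : ¬(G.Adj (v (2 * ℓ)) (v 1) ∨ v (2 * ℓ) = v 1) :=
        notGood (2 * ℓ) 1 (by omega) (by omega) (by omega) (by omega)
      rcases ms_quad hM with ⟨h1, h2⟩ | ⟨h1, h2⟩ | ⟨h1, h2⟩ | ⟨h1, h2⟩ | ⟨h1, h2⟩ | ⟨h1, h2⟩
      · rw [ev_pair_of_ms h1, ev_pair_of_ms h2]
      · rw [ev_pair_of_ms h1, ev_pair_of_ms h2]
        exact ms_rot2' _ _
      · exact absurd (badpair _ _ _ _ hxy' h2) hQS
      · exact absurd (badpair _ _ _ _ hxy h1) hQS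
      · -- {x,y} = {v 0, v 1}, {x',y'} = {v 2ℓ, v 0}
        rw [ev_pair_of_ms h1, ev_pair_of_ms h2, add_comm (ev (v (2 * ℓ)))]
        exact ms_rot2' _ _
      · -- {x,y} = {v 2ℓ, v 0}, {x',y'} = {v 0, v 1}
        rw [ev_pair_of_ms h1, ev_pair_of_ms h2, add_comm (ev (v (2 * ℓ)))]
    -- decompose the hypothesis {a, a'} ≤ L
    have hLnd : L.Nodup := by
      refine Multiset.nodup_cons.mpr ⟨?_, ?_⟩
      · intro hmem
        obtain ⟨k, hk, he⟩ := Multiset.mem_map.mp hmem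
        have hk' := Multiset.mem_range.mp hk
        rcases pairidx (2 * k) (2 * k + 1) 0 (2 * ℓ) (by omega) (by omega) (by omega)
          (by omega) he with ⟨h2, h3⟩ | ⟨h2, h3⟩ <;> omega
      · refine Multiset.Nodup.map_on ?_ (Multiset.nodup_range ℓ)
        intro i hi j hj he
        have hi' := Multiset.mem_range.mp hi
        have hj' := Multiset.mem_range.mp hj
        rcases pairidx (2 * i) (2 * i + 1) (2 * j) (2 * j + 1) (by omega) (by omega) (by omega)
          (by omega) he with ⟨h2, h3⟩ | ⟨h2, h3⟩ <;> omega
    have haL : a ∈ L := Multiset.subset_of_le hle (Multiset.mem_cons_self a _)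
    have haL' : a' ∈ L := Multiset.subset_of_le hle (by
      exact Multiset.mem_cons.mpr (Or.inr (Multiset.mem_singleton_self a')))
    have hane : a ≠ a' := by
      rintro rfl
      have h2 : 2 ≤ L.count a := by
        have := Multiset.le_iff_count.mp hle a
        simpa using this
      have := Multiset.nodup_iff_count_le_one.mp hLnd a
      omega
    have memL : ∀ w : V → ℤ, w ∈ L → w = ev (v 0) + ev (v (2 * ℓ)) ∨
        ∃ k, k < ℓ ∧ w = ev (v (2 * k)) + ev (v (2 * k + 1)) := by
      intro w hw
      rcases Multiset.mem_cons.mp hw with h | h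
      · exact Or.inl h
      · obtain ⟨k, hk, he⟩ := Multiset.mem_map.mp h
        exact Or.inr ⟨k, Multiset.mem_range.mp hk, he.symm⟩
    rcases memL a haL with ha | ⟨k, hk, ha⟩ <;> rcases memL a' haL' with ha' | ⟨j, hj, ha'⟩
    · exact absurd (ha.trans ha'.symm) hane
    · subst ha ha'
      by_cases hj0 : j = 0
      · subst hj0
        exact shared b b' hb hb' heq
      · refine master 0 (2 * ℓ) (2 * j) (2 * j + 1) ?_ ?_ b b' hb hb' heq
        · exact Or.inl (notGood 0 (2 * j) (by omega) (by omega) (by omega) (by omega))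
        · exact Or.inl (notGood 0 (2 * j + 1) (by omega) (by omega) (by omega) (by omega))
    · subst ha ha'
      by_cases hk0 : k = 0
      · subst hk0
        have heq' : (ev (v 0) + ev (v (2 * ℓ))) + (ev (v 0) + ev (v 1)) = b + b' := by
          rw [← heq]; abel
        rw [ms_rot2']
        exact shared b b' hb hb' heq'
      · refine master (2 * k) (2 * k + 1) 0 (2 * ℓ) ?_ ?_ b b' hb hb' heq
        · exact Or.inl (notGood (2 * k) 0 (by omega) (by omega) (by omega) (by omega))
        · exact Or.inl (notGood (2 * k) (2 * ℓ) (by omega) (by omega) (by omega) (by omega))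
    · subst ha ha'
      have hkj : k ≠ j := by
        intro h
        exact hane (by rw [h])
      refine master (2 * k) (2 * k + 1) (2 * j) (2 * j + 1) ?_ ?_ b b' hb hb' heq
      · exact Or.inl (notGood (2 * k) (2 * j) (by omega) (by omega) (by omega) (by omega))
      · by_cases hadj : 2 * k = 2 * j + 2
        · exact Or.inr (notGood (2 * k + 1) (2 * j) (by omega) (by omega) (by omega) (by omega))
        · exact Or.inl (notGood (2 * k) (2 * j + 1) (by omega) (by omega) (by omega) (by omega))
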